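/- For all real n > 1/2 and all x ≥ 0, the ratio of parabolic cylinder functions satisfies 2/(x + sqrt(4n + 2 + x²)) < U(n,x)/U(n-1,x) < 2/(x + sqrt(4n - 2 + x²)). Moreover the lower bound also holds for n ∈ (-1/2, 1/2), and equals the ratio exactly when n = -1/2. -/

import Mathlib

open Filter

/-- The parabolic cylinder function `U(a,x)` (DLMF §12), characterized as a
family `U` (with `x`-derivative `U'`) of solutions of `y'' = (x²/4 + a) y`
that is recessive as `x → +∞`, positive for `a > -1/2`, and satisfies the
recurrence `U(a-1,x) = x U(a,x) + (a + 1/2) U(a+1,x)`. -/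
structure IsParabolicCylinderU (U U' : ℝ → ℝ → ℝ) : Prop where
  hasDeriv : ∀ a x : ℝ, HasDerivAt (U a) (U' a x) x
  ode : ∀ a x : ℝ, HasDerivAt (U' a) ((x ^ 2 / 4 + a) * U a x) x
  recessive : ∀ a : ℝ, Tendsto (U a) atTop (nhds 0)
  pos : ∀ a x : ℝ, -1/2 < a → 0 < U a x
  recurrence : ∀ a x : ℝ, U (a - 1) x = x * U a x + (a + 1/2) * U (a + 1) x


namespace PCFaux
open Set

variable {U U' : ℝ → ℝ → ℝ}

theorem T1 (hU : IsParabolicCylinderU U U') (b : ℝ) :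
    Tendsto (fun x => x * U b x) atTop (nhds 0) := by
  have h : ∀ x : ℝ, x * U b x = U (b - 1) x - (b + 1/2) * U (b + 1) x := by
    intro x
    have := hU.recurrence b x
    linarith
  have : Tendsto (fun x => U (b-1) x - (b + 1/2) * U (b+1) x) atTop (nhds 0) := by
    have h1 := hU.recessive (b-1)
    have h2 := (hU.recessive (b+1)).const_mul (b + 1/2)
    simpa using h1.sub h2
  exact this.congr (fun x => (h x).symm)

theorem T2 (hU : IsParabolicCylinderU U U') (b : ℝ) :
    Tendsto (fun x => x ^ 2 * U b x) atTop (nhds 0) := by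
  have h : ∀ x : ℝ, x ^ 2 * U b x = x * U (b - 1) x - (b + 1/2) * (x * U (b + 1) x) := by
    intro x
    have h := hU.recurrence b x
    have : x * U (b-1) x = x*(x * U b x) + (b + 1/2) * (x * U (b + 1) x) := by
      rw [h]; ring
    nlinarith [this]
  have : Tendsto (fun x => x * U (b-1) x - (b + 1/2) * (x * U (b+1) x)) atTop (nhds 0) := by
    have h1 := T1 hU (b-1)
    have h2 := (T1 hU (b+1)).const_mul (b + 1/2)
    simpa using h1.sub h2
  exact this.congr (fun x => (h x).symm)

/-- positivity of `U a x` for `x ≥ 0` and `a > -3/2`. -/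
theorem posx (hU : IsParabolicCylinderU U U') (a x : ℝ) (ha : -3/2 < a) (hx : 0 ≤ x) :
    0 < U a x := by
  rcases lt_or_ge (-1/2 : ℝ) a with h | h
  · exact hU.pos a x h
  · have h1 : U (a + 1 - 1) x = x * U (a+1) x + (a + 1 + 1/2) * U (a+1+1) x :=
      hU.recurrence (a+1) x
    have h2 : a + 1 - 1 = a := by ring
    rw [h2] at h1
    have p1 : 0 < U (a+1) x := hU.pos _ x (by linarith)
    have p2 : 0 < U (a+1+1) x := hU.pos _ x (by linarith)
    rw [h1]
    have : 0 ≤ x * U (a+1) x := mul_nonneg hx p1.le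
    nlinarith

/-- `U' b → 0` at `+∞` for `b > -1/2`. -/
theorem T3 (hU : IsParabolicCylinderU U U') (b : ℝ) (hb : -1/2 < b) :
    Tendsto (U' b) atTop (nhds 0) := by
  set x0 : ℝ := 2 * (|b| + 1) with hx0def
  have hx0pos : 0 < x0 := by positivity
  have hq : ∀ x : ℝ, x0 ≤ x → 0 < x ^ 2 / 4 + b := by
    intro x hx
    have h1 : |b| ≥ b := le_abs_self b
    have h2 : -b ≤ |b| := neg_le_abs b
    have h3 : 0 ≤ |b| := abs_nonneg b
    nlinarith
  -- U' b monotone on Ici x0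
  have hdiffU' : Differentiable ℝ (U' b) := fun x => (hU.ode b x).differentiableAt
  have hmono : MonotoneOn (U' b) (Ici x0) := by
    apply monotoneOn_of_deriv_nonneg (convex_Ici x0) hdiffU'.continuous.continuousOn
      (hdiffU'.differentiableOn)
    intro x hx
    rw [interior_Ici] at hx
    rw [(hU.ode b x).deriv]
    exact mul_nonneg (hq x (le_of_lt hx)).le (hU.pos b x hb).le
  -- linear growth helper: if U' b ≥ c on [x1, ∞) then U b x ≥ U b x1 + c (x - x1)
  have growth : ∀ c x1 : ℝ, (∀ t, x1 ≤ t → c ≤ U' b t) →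
      ∀ x, x1 ≤ x → U b x1 + c * (x - x1) ≤ U b x := by
    intro c x1 hc x hx
    have hmono2 : MonotoneOn (fun t => U b t - c * t) (Ici x1) := by
      have hdiff : Differentiable ℝ (fun t => U b t - c * t) := fun t =>
        ((hU.hasDeriv b t).sub ((hasDerivAt_id t).const_mul c)).differentiableAt
      apply monotoneOn_of_deriv_nonneg (convex_Ici x1) hdiff.continuous.continuousOn
        hdiff.differentiableOn
      intro t ht
      rw [interior_Ici] at ht
      have hd : HasDerivAt (fun t => U b t - c * t) (U' b t - c * 1) t :=
        (hU.hasDeriv b t).sub ((hasDerivAt_id t).const_mul c)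
      rw [hd.deriv]
      have := hc t ht.le
      linarith
    have := hmono2 (self_mem_Ici) (mem_Ici.mpr hx) hx
    simp only at this
    linarith
  -- U' b ≤ 0 on Ici x0
  have hneg : ∀ x, x0 ≤ x → U' b x ≤ 0 := by
    intro x1 hx1
    by_contra hpos
    push_neg at hpos
    set c := U' b x1 with hc
    have hcpos : 0 < c := hpos
    have hge : ∀ t, x1 ≤ t → c ≤ U' b t := fun t ht =>
      hmono (mem_Ici.mpr hx1) (mem_Ici.mpr (hx1.trans ht)) ht
    have hgrow := growth c x1 hge
    -- pick X with U b X < U b x1 and X ≥ x1 + 1/c... contradiction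
    have hev1 : ∀ᶠ x in atTop, U b x < U b x1 := by
      have := hU.recessive b
      have hp : 0 < U b x1 := hU.pos b x1 hb
      exact (this.eventually (eventually_lt_nhds hp)).mono (fun x h => h)
    have hev2 : ∀ᶠ x : ℝ in atTop, x1 ≤ x := eventually_ge_atTop x1
    obtain ⟨X, h1, h2⟩ := (hev1.and hev2).exists
    have := hgrow X h2
    nlinarith [this, h1]
  -- limit exists via monotone bounded
  set f : ℝ → ℝ := fun x => U' b (max x x0) with hf
  have hfmono : Monotone f := by
    intro x y hxy
    exact hmono (mem_Ici.mpr (le_max_right x x0)) (mem_Ici.mpr (le_max_right y x0))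
      (max_le_max hxy le_rfl)
  have hfbdd : BddAbove (range f) := by
    refine ⟨0, ?_⟩
    rintro _ ⟨x, rfl⟩
    exact hneg _ (le_max_right x x0)
  have hftend : Tendsto f atTop (nhds (⨆ x, f x)) := tendsto_atTop_ciSup hfmono hfbdd
  set L := ⨆ x, f x with hL
  have hLle : L ≤ 0 := ciSup_le fun x => hneg _ (le_max_right x x0)
  have hcongr : U' b =ᶠ[atTop] f := by
    filter_upwards [eventually_ge_atTop x0] with x hx
    simp [hf, max_eq_left hx]
  have htend : Tendsto (U' b) atTop (nhds L) := hftend.congr' hcongr.symm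
  -- show L = 0
  have hL0 : L = 0 := by
    by_contra hne
    have hLlt : L < 0 := lt_of_le_of_ne hLle hne
    have hle : ∀ x, x0 ≤ x → U' b x ≤ L := by
      intro x hx
      have : U' b x = f x := by simp [hf, max_eq_left hx]
      rw [this]
      exact le_ciSup hfbdd x
    -- then U b decreases linearly, contradicting positivity
    have hanti : ∀ x, x0 ≤ x → U b x ≤ U b x0 + L * (x - x0) := by
      intro x hx
      have hmono2 : MonotoneOn (fun t => L * t - U b t) (Ici x0) := by
        have hdiff : Differentiable ℝ (fun t => L * t - U b t) := fun t =>
          (((hasDerivAt_id t).const_mul L).sub (hU.hasDeriv b t)).differentiableAt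
        apply monotoneOn_of_deriv_nonneg (convex_Ici x0) hdiff.continuous.continuousOn
          hdiff.differentiableOn
        intro t ht
        rw [interior_Ici] at ht
        have hd : HasDerivAt (fun t => L * t - U b t) (L * 1 - U' b t) t :=
          ((hasDerivAt_id t).const_mul L).sub (hU.hasDeriv b t)
        rw [hd.deriv]
        have := hle t ht.le
        linarith
      have := hmono2 (self_mem_Ici) (mem_Ici.mpr hx) hx
      simp only at this
      linarith
    obtain ⟨X, hX1, hX2⟩ := ((eventually_ge_atTop x0).and
      (eventually_ge_atTop (x0 + (U b x0 + 1) / (-L)))).exists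
    have h1 := hanti X hX1
    have h2 : 0 < U b X := hU.pos b X hb
    have h3 : 0 < -L := by linarith
    have h4 : (U b x0 + 1) / (-L) ≤ X - x0 := by linarith
    have h5 : U b x0 + 1 ≤ (-L) * (X - x0) := by
      rw [div_le_iff₀ h3] at h4
      linarith
    nlinarith
  rwa [hL0] at htend


/-- Uniqueness: any solution of `y'' = (x²/4+c) y` tending to 0 (with the product
condition) is a multiple of `U c`. -/
theorem uniq (hU : IsParabolicCylinderU U U') (c : ℝ) (hc : -1/2 < c)
    (y y1 : ℝ → ℝ)
    (hy : ∀ x, HasDerivAt y (y1 x) x)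
    (hy1 : ∀ x, HasDerivAt y1 ((x ^ 2 / 4 + c) * y x) x)
    (h0 : Tendsto y atTop (nhds 0))
    (h1 : Tendsto (fun x => y1 x * U c x) atTop (nhds 0)) :
    ∀ x, y x = (y 0 / U c 0) * U c x := by
  have hUpos : ∀ x : ℝ, 0 < U c x := fun x => hU.pos c x hc
  have hUd : ∀ x : ℝ, HasDerivAt (U c) (U' c x) x := hU.hasDeriv c
  have hUod : ∀ x : ℝ, HasDerivAt (U' c) ((x ^ 2 / 4 + c) * U c x) x := hU.ode c
  have hU'0 : Tendsto (U' c) atTop (nhds 0) := T3 hU c hc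
  set W : ℝ → ℝ := fun x => y x * U' c x - y1 x * U c x with hW
  have hWd : ∀ x, HasDerivAt W 0 x := by
    intro x
    have h := ((hy x).mul (hUod x)).sub ((hy1 x).mul (hUd x))
    refine h.congr_deriv ?_
    ring
  have hWconst : ∀ x, W x = W 0 := by
    intro x
    exact is_const_of_deriv_eq_zero (fun t => (hWd t).differentiableAt)
      (fun t => (hWd t).deriv) x 0
  have hWtend : Tendsto W atTop (nhds 0) := by
    have := (h0.mul hU'0).sub h1
    simpa using this
  have hW0 : W 0 = 0 := by
    have h2 : Tendsto W atTop (nhds (W 0)) := by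
      have : W = fun _ => W 0 := funext hWconst
      rw [this]; exact tendsto_const_nhds
    exact tendsto_nhds_unique h2 hWtend
  have hWzero : ∀ x, W x = 0 := fun x => (hWconst x).trans hW0
  -- quotient
  have hq : ∀ x, HasDerivAt (fun t => y t / U c t) 0 x := by
    intro x
    have h := (hy x).div (hUd x) (ne_of_gt (hUpos x))
    have hnum : y1 x * U c x - y x * U' c x = 0 := by
      have := hWzero x; simp only [hW] at this; linarith
    rw [hnum] at h
    exact h.congr_deriv (zero_div _)
  have hqconst : ∀ x, y x / U c x = y 0 / U c 0 := by
    intro x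
    exact is_const_of_deriv_eq_zero (fun t => (hq t).differentiableAt)
      (fun t => (hq t).deriv) x 0
  intro x
  have h := hqconst x
  rw [div_eq_div_iff (ne_of_gt (hUpos x)) (ne_of_gt (hUpos 0))] at h
  rw [div_mul_eq_mul_div, eq_div_iff (ne_of_gt (hUpos 0))]
  linarith [h]

theorem gq (hU : IsParabolicCylinderU U U') (a : ℝ) (ha : -1/2 < a) :
    ∃ lam : ℝ, ∀ x : ℝ,
      U' a x + x/2 * U a x + (a + 1/2) * U (a+1) x = lam * U (a+1) x := by
  set y : ℝ → ℝ := fun t => U' a t + t/2 * U a t + (a + 1/2) * U (a+1) t with hy_def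
  set y1 : ℝ → ℝ := fun t =>
    (t^2/4 + a + 1/2) * U a t + t/2 * U' a t + (a + 1/2) * U' (a+1) t with hy1_def
  have hpos : ∀ x : ℝ, 0 < U (a+1) x := fun x => hU.pos (a+1) x (by linarith)
  have hy : ∀ x, HasDerivAt y (y1 x) x := by
    intro x
    have h1 := hU.ode a x
    have h2 : HasDerivAt (fun t => t/2 * U a t) (1/2 * U a x + x/2 * U' a x) x := by
      have := ((hasDerivAt_id x).div_const 2).mul (hU.hasDeriv a x)
      exact this
    have h3 := (hU.hasDeriv (a+1) x).const_mul (a + 1/2)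
    have h := (h1.add h2).add h3
    refine h.congr_deriv ?_
    simp only [hy1_def]
    ring
  have hy1 : ∀ x, HasDerivAt y1 ((x ^ 2 / 4 + (a+1)) * y x) x := by
    intro x
    have k1 : HasDerivAt (fun t : ℝ => (t^2/4 + a + 1/2) * U a t)
        ((2*x/4) * U a x + (x^2/4 + a + 1/2) * U' a x) x := by
      have hp : HasDerivAt (fun t : ℝ => t^2/4 + a + 1/2) (2*x/4) x := by
        have h := ((hasDerivAt_pow 2 x).div_const 4).add_const (a + 1/2)
        have he : (fun t : ℝ => t^2/4 + a + 1/2) = (fun t : ℝ => t^2/4 + (a + 1/2)) := by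
          funext t; ring
        rw [he]
        simpa using h
      exact hp.mul (hU.hasDeriv a x)
    have k2 : HasDerivAt (fun t => t/2 * U' a t)
        (1/2 * U' a x + x/2 * ((x^2/4 + a) * U a x)) x := by
      have := ((hasDerivAt_id x).div_const 2).mul (hU.ode a x)
      exact this
    have k3 := (hU.ode (a+1) x).const_mul (a + 1/2)
    have h := (k1.add k2).add k3
    refine h.congr_deriv ?_
    simp only [hy_def]
    ring
  have h0 : Tendsto y atTop (nhds 0) := by
    have hA := T3 hU a ha
    have hB : Tendsto (fun x : ℝ => x/2 * U a x) atTop (nhds 0) := by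
      have := (T1 hU a).div_const 2
      simp only [zero_div] at this
      exact this.congr (fun x => by ring)
    have hC := (hU.recessive (a+1)).const_mul (a + 1/2)
    rw [hy_def]
    have := (hA.add hB).add hC
    simpa using this
  have h1 : Tendsto (fun x => y1 x * U (a+1) x) atTop (nhds 0) := by
    have hA : Tendsto (fun x : ℝ =>
        (x^2 * U a x/4 + (a+1/2) * U a x) * U (a+1) x) atTop (nhds 0) := by
      have h := (((T2 hU a).div_const 4).add ((hU.recessive a).const_mul (a+1/2))).mul
        (hU.recessive (a+1))
      simpa using h
    have hB : Tendsto (fun x : ℝ => U' a x * (x * U (a+1) x) / 2) atTop (nhds 0) := by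
      have h := ((T3 hU a ha).mul (T1 hU (a+1))).div_const 2
      simpa using h
    have hC : Tendsto (fun x : ℝ => (a+1/2) * (U' (a+1) x * U (a+1) x)) atTop (nhds 0) := by
      have h := ((T3 hU (a+1) (by linarith)).mul (hU.recessive (a+1))).const_mul (a+1/2)
      simpa using h
    have h := (hA.add hB).add hC
    have h' : Tendsto (fun x : ℝ =>
        (x^2 * U a x/4 + (a+1/2) * U a x) * U (a+1) x
        + U' a x * (x * U (a+1) x) / 2
        + (a+1/2) * (U' (a+1) x * U (a+1) x)) atTop (nhds 0) := by simpa using h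
    exact h'.congr (fun x => by simp only [hy1_def]; ring)
  exact ⟨y 0 / U (a+1) 0,
    uniq hU (a+1) (by linarith) y y1 hy hy1 h0 h1⟩

theorem hq (hU : IsParabolicCylinderU U U') (a : ℝ) (ha : -1/2 < a) :
    ∃ mu : ℝ, ∀ x : ℝ,
      U' (a+1) x - x/2 * U (a+1) x + U a x = mu * U a x := by
  set y : ℝ → ℝ := fun t => U' (a+1) t - t/2 * U (a+1) t + U a t with hy_def
  set y1 : ℝ → ℝ := fun t =>
    (t^2/4 + a + 1/2) * U (a+1) t - t/2 * U' (a+1) t + U' a t with hy1_def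
  have hpos : ∀ x : ℝ, 0 < U a x := fun x => hU.pos a x ha
  have hy : ∀ x, HasDerivAt y (y1 x) x := by
    intro x
    have h1 := hU.ode (a+1) x
    have h2 : HasDerivAt (fun t => t/2 * U (a+1) t) (1/2 * U (a+1) x + x/2 * U' (a+1) x) x := by
      have := ((hasDerivAt_id x).div_const 2).mul (hU.hasDeriv (a+1) x)
      exact this
    have h3 := hU.hasDeriv a x
    have h := (h1.sub h2).add h3
    refine h.congr_deriv ?_
    simp only [hy1_def]
    ring
  have hy1 : ∀ x, HasDerivAt y1 ((x ^ 2 / 4 + a) * y x) x := by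
    intro x
    have k1 : HasDerivAt (fun t : ℝ => (t^2/4 + a + 1/2) * U (a+1) t)
        ((2*x/4) * U (a+1) x + (x^2/4 + a + 1/2) * U' (a+1) x) x := by
      have hp : HasDerivAt (fun t : ℝ => t^2/4 + a + 1/2) (2*x/4) x := by
        have h := ((hasDerivAt_pow 2 x).div_const 4).add_const (a + 1/2)
        have he : (fun t : ℝ => t^2/4 + a + 1/2) = (fun t : ℝ => t^2/4 + (a + 1/2)) := by
          funext t; ring
        rw [he]
        simpa using h
      exact hp.mul (hU.hasDeriv (a+1) x)
    have k2 : HasDerivAt (fun t => t/2 * U' (a+1) t)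
        (1/2 * U' (a+1) x + x/2 * ((x^2/4 + (a+1)) * U (a+1) x)) x := by
      have := ((hasDerivAt_id x).div_const 2).mul (hU.ode (a+1) x)
      exact this
    have k3 := hU.ode a x
    have h := (k1.sub k2).add k3
    refine h.congr_deriv ?_
    simp only [hy_def]
    ring
  have h0 : Tendsto y atTop (nhds 0) := by
    have hA := T3 hU (a+1) (by linarith)
    have hB : Tendsto (fun x : ℝ => x/2 * U (a+1) x) atTop (nhds 0) := by
      have := (T1 hU (a+1)).div_const 2
      simp only [zero_div] at this
      exact this.congr (fun x => by ring)
    have hC := hU.recessive a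
    rw [hy_def]
    have := (hA.sub hB).add hC
    simpa using this
  have h1 : Tendsto (fun x => y1 x * U a x) atTop (nhds 0) := by
    have hA : Tendsto (fun x : ℝ =>
        (x^2 * U (a+1) x/4 + (a+1/2) * U (a+1) x) * U a x) atTop (nhds 0) := by
      have h := (((T2 hU (a+1)).div_const 4).add ((hU.recessive (a+1)).const_mul (a+1/2))).mul
        (hU.recessive a)
      simpa using h
    have hB : Tendsto (fun x : ℝ => U' (a+1) x * (x * U a x) / 2) atTop (nhds 0) := by
      have h := ((T3 hU (a+1) (by linarith)).mul (T1 hU a)).div_const 2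
      simpa using h
    have hC : Tendsto (fun x : ℝ => U' a x * U a x) atTop (nhds 0) := by
      have h := (T3 hU a ha).mul (hU.recessive a)
      simpa using h
    have h := (hA.sub hB).add hC
    have h' : Tendsto (fun x : ℝ =>
        (x^2 * U (a+1) x/4 + (a+1/2) * U (a+1) x) * U a x
        - U' (a+1) x * (x * U a x) / 2
        + U' a x * U a x) atTop (nhds 0) := by simpa using h
    exact h'.congr (fun x => by simp only [hy1_def]; ring)
  exact ⟨y 0 / U a 0, uniq hU a ha y y1 hy hy1 h0 h1⟩

theorem rel_both (hU : IsParabolicCylinderU U U') (a : ℝ) (ha : -1/2 < a) :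
    (∀ x : ℝ, U' a x = -(x/2) * U a x - (a + 1/2) * U (a+1) x) ∧
    (∀ x : ℝ, U' (a+1) x = x/2 * U (a+1) x - U a x) := by
  obtain ⟨lam, hlam⟩ := gq hU a ha
  obtain ⟨mu, hmu⟩ := hq hU a ha
  obtain ⟨lam', hlam'⟩ := gq hU (a+1) (by linarith)
  have hrec : ∀ x : ℝ, U a x = x * U (a+1) x + (a+1+1/2) * U (a+1+1) x := by
    intro x
    have h := hU.recurrence (a+1) x
    rwa [show a+1-1 = a by ring] at h
  have comb : ∀ x : ℝ, (mu - 1) * U a x + x * U (a+1) x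
      + (a+1+1/2 - lam') * U (a+1+1) x = 0 := by
    intro x
    have h1 := hmu x
    have h2 := hlam' x
    linarith
  have hC0 : 0 < U (a+1+1) 0 := hU.pos _ 0 (by linarith)
  have hB1 : 0 < U (a+1) 1 := hU.pos _ 1 (by linarith)
  have e0 : (mu * (a+1+1/2) - lam') * U (a+1+1) 0 = 0 := by
    linear_combination comb 0 - (mu - 1) * hrec 0
  have e0' : lam' = mu * (a+1+1/2) := by
    rcases mul_eq_zero.mp e0 with h | h
    · linarith
    · exact absurd h hC0.ne'
  have e1 : mu * U (a+1) 1 = 0 := by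
    linear_combination comb 1 - (mu - 1) * hrec 1 + U (a+1+1) 1 * e0'
  have hmu0 : mu = 0 := by
    rcases mul_eq_zero.mp e1 with h | h
    · exact h
    · exact absurd h hB1.ne'
  have rel2 : ∀ x : ℝ, U' (a+1) x = x/2 * U (a+1) x - U a x := by
    intro x
    have := hmu x
    rw [hmu0] at this
    linarith
  refine ⟨?_, rel2⟩
  -- now show lam = 0
  have hfun : U' a = (fun x : ℝ => lam * U (a+1) x - x/2 * U a x - (a+1/2) * U (a+1) x) :=
    funext (fun x => by have := hlam x; linarith)
  have hd1 : HasDerivAt (U' a) ((0 ^ 2 / 4 + a) * U a 0) 0 := hU.ode a 0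
  have hd2 : HasDerivAt (fun x : ℝ => lam * U (a+1) x - x/2 * U a x - (a+1/2) * U (a+1) x)
      (lam * U' (a+1) 0 - (1/2 * U a 0 + 0/2 * U' a 0) - (a+1/2) * U' (a+1) 0) 0 := by
    have k1 := (hU.hasDeriv (a+1) 0).const_mul lam
    have k2 : HasDerivAt (fun t : ℝ => t/2 * U a t) (1/2 * U a 0 + 0/2 * U' a 0) 0 := by
      have := ((hasDerivAt_id (0:ℝ)).div_const 2).mul (hU.hasDeriv a 0)
      exact this
    have k3 := (hU.hasDeriv (a+1) 0).const_mul (a+1/2)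
    exact (k1.sub k2).sub k3
  rw [hfun] at hd1
  have heq := hd1.unique hd2
  have hz : U' (a+1) 0 = -U a 0 := by
    have := rel2 0
    simpa using this
  rw [hz] at heq
  have hA0 : 0 < U a 0 := hU.pos a 0 ha
  have hlam0 : lam = 0 := by nlinarith [heq, hA0]
  intro x
  have := hlam x
  rw [hlam0] at this
  linarith


theorem ratio_lt (hU : IsParabolicCylinderU U U') (a : ℝ) (ha : -1/2 < a) (x : ℝ) (hx : 0 ≤ x) :
    U (a+1) x / U a x < 2 / (x + Real.sqrt (x^2 + (4*a+2))) := by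
  obtain ⟨rel1, rel2⟩ := rel_both hU a ha
  have hApos : ∀ t : ℝ, 0 < U a t := fun t => hU.pos a t ha
  have hBpos : ∀ t : ℝ, 0 < U (a+1) t := fun t => hU.pos (a+1) t (by linarith)
  set r : ℝ → ℝ := fun t => U (a+1) t / U a t with hrdef
  have hr : ∀ t : ℝ, HasDerivAt r ((a+1/2) * r t^2 + t * r t - 1) t := by
    intro t
    have h := (hU.hasDeriv (a+1) t).div (hU.hasDeriv a t) (hApos t).ne'
    refine h.congr_deriv ?_
    rw [rel1 t, rel2 t]
    have hA := (hApos t).ne'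
    simp only [hrdef]
    field_simp
    ring
  set c : ℝ := 4*a + 2 with hcdef
  have hc : 0 < c := by rw [hcdef]; linarith
  set s : ℝ → ℝ := fun t => Real.sqrt (t^2 + c) with hsdef
  have hsarg : ∀ t : ℝ, 0 < t^2 + c := fun t => by positivity
  have hspos : ∀ t : ℝ, 0 < s t := fun t => Real.sqrt_pos.mpr (hsarg t)
  have hssq : ∀ t : ℝ, s t ^ 2 = t^2 + c := fun t => Real.sq_sqrt (hsarg t).le
  have hts : ∀ t : ℝ, 0 < t + s t := by
    intro t
    have h1 : |t| < s t := by
      rw [hsdef]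
      have := Real.sqrt_lt_sqrt (sq_nonneg t) (by linarith : t^2 < t^2 + c)
      rwa [Real.sqrt_sq_eq_abs] at this
    have := neg_abs_le t
    linarith
  set φ : ℝ → ℝ := fun t => 2 / (t + s t) with hφdef
  have hφpos : ∀ t : ℝ, 0 < φ t := fun t => div_pos two_pos (hts t)
  have root : ∀ t : ℝ, (a+1/2) * φ t^2 + t * φ t - 1 = 0 := by
    intro t
    have h1 := (hts t).ne'
    have h2 := hssq t
    simp only [hφdef]
    field_simp
    linarith [h2, hcdef]
  have hsd : ∀ t : ℝ, HasDerivAt s (t / s t) t := by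
    intro t
    have harg : HasDerivAt (fun u : ℝ => u^2 + c) (2*t) t := by
      simpa using (hasDerivAt_pow 2 t).add_const c
    have h := (Real.hasDerivAt_sqrt (hsarg t).ne').comp t harg
    refine h.congr_deriv ?_
    rw [hsdef]
    field_simp
  set φd : ℝ → ℝ := fun t => -(2 * (1 + t / s t)) / (t + s t)^2 with hφddef
  have hφd : ∀ t : ℝ, HasDerivAt φ (φd t) t := by
    intro t
    have hw : HasDerivAt (fun u : ℝ => u + s u) (1 + t / s t) t :=
      (hasDerivAt_id t).add (hsd t)
    have h := (hasDerivAt_const t (2:ℝ)).div hw (hts t).ne'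
    refine h.congr_deriv ?_
    simp only [hφddef]
    ring
  have hφd_neg : ∀ t : ℝ, 0 ≤ t → φd t < 0 := by
    intro t ht
    apply div_neg_of_neg_of_pos
    · have : 0 ≤ t / s t := div_nonneg ht (hspos t).le
      linarith
    · exact pow_pos (hts t) 2
  have hrpos : ∀ t : ℝ, 0 < r t := fun t => div_pos (hBpos t) (hApos t)
  have hrec : ∀ t : ℝ, U a t = t * U (a+1) t + (a+1+1/2) * U (a+1+1) t := by
    intro t
    have h := hU.recurrence (a+1) t
    rwa [show a+1-1 = a by ring] at h
  have hr0 : Tendsto r atTop (nhds 0) := by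
    have hup : ∀ᶠ t : ℝ in atTop, r t ≤ 1/t := by
      filter_upwards [eventually_gt_atTop (0:ℝ)] with t ht
      have h1 := hrec t
      have h2 : 0 < U (a+1+1) t := hU.pos _ t (by linarith)
      have h3 : t * U (a+1) t ≤ U a t := by nlinarith
      have : U (a+1) t / U a t ≤ 1 / t := by
        rw [div_le_div_iff₀ (hApos t) ht]
        nlinarith
      simpa [hrdef] using this
    have hinv : Tendsto (fun t : ℝ => 1/t) atTop (nhds 0) := by
      simpa using tendsto_inv_atTop_zero
    exact squeeze_zero' (Eventually.of_forall fun t => (hrpos t).le) hup hinv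
  -- main contradiction argument
  by_contra hcon
  push_neg at hcon   -- φ x ≤ r x  (goal was r x < φ x)
  have hφxr : φ x ≤ r x := by
    have : U (a+1) x / U a x = r x := by rw [hrdef]
    have hφx : 2 / (x + Real.sqrt (x^2 + (4*a+2))) = φ x := by
      rw [hφdef, hsdef, hcdef]
    rw [this, hφx] at hcon
    exact hcon
  have hcont_r : Continuous r := continuous_iff_continuousAt.mpr
    (fun t => (hr t).differentiableAt.continuousAt)
  have hcont_φ : Continuous φ := continuous_iff_continuousAt.mpr
    (fun t => (hφd t).differentiableAt.continuousAt)
  set d : ℝ → ℝ := fun u => r u - φ u with hddef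
  have hcont_d : Continuous d := hcont_r.sub hcont_φ
  -- Claim A: φ ≤ r on [x, ∞)
  have claimA : ∀ t : ℝ, x ≤ t → φ t ≤ r t := by
    intro t ht
    by_contra hlt
    push_neg at hlt
    have hdt : d t < 0 := by simp [hddef]; linarith
    set S : Set ℝ := Icc x t ∩ {u | 0 ≤ d u} with hSdef
    have hSclosed : IsClosed S := isClosed_Icc.inter (isClosed_le continuous_const hcont_d)
    have hxS : x ∈ S := ⟨⟨le_refl x, ht⟩, by simp [hddef]; linarith⟩
    have hSbdd : BddAbove S := ⟨t, fun u hu => hu.1.2⟩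
    set z : ℝ := sSup S with hzdef
    have hzS : z ∈ S := hSclosed.csSup_mem ⟨x, hxS⟩ hSbdd
    have hxz : x ≤ z := hzS.1.1
    have hzt : z ≤ t := hzS.1.2
    have hdz_nonneg : 0 ≤ d z := hzS.2
    have hzt' : z < t := lt_of_le_of_ne hzt (fun h => by rw [h] at hdz_nonneg; linarith)
    have hdz_le : d z ≤ 0 := by
      by_contra hpos
      push_neg at hpos
      have hev : ∀ᶠ u in nhds z, 0 < d u :=
        (hcont_d.continuousAt).eventually (eventually_gt_nhds hpos)
      have hev' : ∀ᶠ u in nhdsWithin z (Ioi z), 0 < d u :=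
        hev.filter_mono nhdsWithin_le_nhds
      have hIoo : Ioo z t ∈ nhdsWithin z (Ioi z) :=
        Ioo_mem_nhdsGT_of_mem ⟨le_refl z, hzt'⟩
      obtain ⟨u, hdu, huIoo⟩ := (hev'.and (eventually_of_mem hIoo (fun u hu => hu))).exists
      have huS : u ∈ S := ⟨⟨hxz.trans huIoo.1.le, huIoo.2.le⟩, hdu.le⟩
      have := le_csSup hSbdd huS
      rw [← hzdef] at this
      linarith [huIoo.1]
    have hdz : d z = 0 := le_antisymm hdz_le hdz_nonneg
    have hrz : r z = φ z := by
      have : r z - φ z = 0 := hdz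
      linarith
    -- derivative of d at z is -φd z > 0
    have hdd : HasDerivAt d (-φd z) z := by
      have h := (hr z).sub (hφd z)
      have hval : (a+1/2) * r z^2 + z * r z - 1 - φd z = -φd z := by
        rw [hrz]
        have := root z
        linarith
      rwa [hval] at h
    have hderiv_pos : 0 < -φd z := by
      have := hφd_neg z (hx.trans hxz)
      linarith
    have hsl := hasDerivAt_iff_tendsto_slope.mp hdd
    have hev2 : ∀ᶠ u in nhdsWithin z {z}ᶜ, 0 < slope d z u :=
      hsl.eventually (eventually_gt_nhds hderiv_pos)
    have hev2' : ∀ᶠ u in nhdsWithin z (Ioi z), 0 < slope d z u :=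
      hev2.filter_mono (nhdsWithin_mono z (fun u hu => ne_of_gt hu))
    have hIoo : Ioo z t ∈ nhdsWithin z (Ioi z) := Ioo_mem_nhdsGT_of_mem ⟨le_refl z, hzt'⟩
    obtain ⟨u, hsu, huIoo⟩ := (hev2'.and (eventually_of_mem hIoo (fun u hu => hu))).exists
    have huz : z < u := huIoo.1
    have hdu_pos : 0 < d u := by
      have hslope : slope d z u = d u / (u - z) := by
        rw [slope_def_field, hdz]
        ring_nf
      rw [hslope] at hsu
      have h2 : 0 < u - z := by linarith
      calc (0:ℝ) < d u / (u - z) * (u - z) := mul_pos hsu h2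
        _ = d u := by field_simp
    have huS : u ∈ S := ⟨⟨hxz.trans huz.le, huIoo.2.le⟩, hdu_pos.le⟩
    have := le_csSup hSbdd huS
    rw [← hzdef] at this
    linarith
  -- r is monotone on [x, ∞)
  have hmono : MonotoneOn r (Ici x) := by
    apply monotoneOn_of_deriv_nonneg (convex_Ici x)
      hcont_r.continuousOn
      (fun t _ => (hr t).differentiableAt.differentiableWithinAt)
    intro t htmem
    rw [interior_Ici] at htmem
    rw [(hr t).deriv]
    have h1 := claimA t htmem.le
    have ht0 : 0 ≤ t := hx.trans htmem.le
    have key : 0 ≤ (r t - φ t) * ((a+1/2) * (r t + φ t) + t) := by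
      apply mul_nonneg (by linarith)
      have := hφpos t
      have := hrpos t
      nlinarith
    nlinarith [key, root t]
  -- contradiction with r → 0
  have hlb : ∀ t : ℝ, x ≤ t → φ x ≤ r t := fun t ht =>
    le_trans hφxr (hmono (self_mem_Ici) (mem_Ici.mpr ht) ht)
  obtain ⟨T, hT1, hT2⟩ := ((hr0.eventually (eventually_lt_nhds (hφpos x))).and
    (eventually_ge_atTop x)).exists
  exact absurd (hlb T hT2) (not_le.mpr hT1)


theorem lower (hU : IsParabolicCylinderU U U') (n x : ℝ) (hn : -1/2 < n) (hx : 0 ≤ x) :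
    2 / (x + Real.sqrt (4 * n + 2 + x ^ 2)) < U n x / U (n - 1) x := by
  have hratio := ratio_lt hU n hn x hx
  have hsqrt_eq : Real.sqrt (4 * n + 2 + x ^ 2) = Real.sqrt (x^2 + (4*n+2)) := by
    congr 1; ring
  rw [hsqrt_eq]
  set s : ℝ := Real.sqrt (x^2 + (4*n+2)) with hsdef
  have harg : 0 < x^2 + (4*n+2) := by nlinarith [sq_nonneg x]
  have hs : 0 < s := Real.sqrt_pos.mpr harg
  have hssq : s^2 = x^2 + (4*n+2) := Real.sq_sqrt harg.le
  have hxs : 0 < x + s := by linarith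
  set φ : ℝ := 2 / (x + s) with hφdef
  have hφpos : 0 < φ := div_pos two_pos hxs
  have root : (n+1/2) * φ^2 + x * φ - 1 = 0 := by
    rw [hφdef]
    field_simp
    nlinarith [hssq]
  have hA : 0 < U n x := hU.pos n x hn
  have hB : 0 < U (n+1) x := hU.pos (n+1) x (by linarith)
  have hC : 0 < U (n-1) x := posx hU (n-1) x (by linarith) hx
  have hrec := hU.recurrence n x
  have hBlt : U (n+1) x < φ * U n x := by
    rw [div_lt_iff₀ hA] at hratio
    exact hratio
  have hkey : φ * U (n-1) x < U n x := by
    have h1 : (n+1/2) * (φ * U (n+1) x) < (n+1/2) * (φ * (φ * U n x)) := by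
      apply mul_lt_mul_of_pos_left _ (by linarith : (0:ℝ) < n + 1/2)
      exact mul_lt_mul_of_pos_left hBlt hφpos
    have h2 : ((n+1/2) * φ^2 + x * φ - 1) * U n x = 0 := by rw [root]; ring
    nlinarith [h1, h2, hrec]
  rw [lt_div_iff₀ hC]
  linarith

theorem upper (hU : IsParabolicCylinderU U U') (n x : ℝ) (hn : 1/2 < n) (hx : 0 ≤ x) :
    U n x / U (n - 1) x < 2 / (x + Real.sqrt (4 * n - 2 + x ^ 2)) := by
  have h := ratio_lt hU (n-1) (by linarith) x hx
  rw [show n - 1 + 1 = n by ring] at h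
  have hsqrt_eq : Real.sqrt (4 * n - 2 + x ^ 2) = Real.sqrt (x^2 + (4*(n-1)+2)) := by
    congr 1; ring
  rw [hsqrt_eq]
  exact h

theorem eqcase (hU : IsParabolicCylinderU U U') (x : ℝ) (hx : 0 < x) :
    2 / (x + Real.sqrt (4 * (-1/2 : ℝ) + 2 + x ^ 2)) = U (-1/2) x / U (-1/2 - 1) x := by
  have h1 : (4 * (-1/2 : ℝ) + 2 + x ^ 2) = x^2 := by ring
  rw [h1, Real.sqrt_sq hx.le]
  have hrec := hU.recurrence (-1/2) x
  have h2 : (-1/2 : ℝ) + 1/2 = 0 := by norm_num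
  rw [h2] at hrec
  have h3 : U (-1/2 - 1) x = x * U (-1/2) x := by rw [hrec]; ring
  have hpos : 0 < U (-1/2) x := posx hU (-1/2) x (by norm_num) hx.le
  rw [h3]
  rw [div_mul_eq_div_div_swap]
  field_simp
  ring_nf
  rw [mul_inv_cancel₀ hpos.ne', one_mul]


end PCFaux

/-- For `n > 1/2` and `x ≥ 0`,
`2/(x + √(4n+2+x²)) < U(n,x)/U(n-1,x) < 2/(x + √(4n-2+x²))`;
the lower bound also holds for `n ∈ (-1/2, 1/2)`, and becomes an equality
for `n = -1/2`. -/
theorem pcf_ratio_bounds (U U' : ℝ → ℝ → ℝ) (hU : IsParabolicCylinderU U U') :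
    (∀ n x : ℝ, 1/2 < n → 0 ≤ x →
      2 / (x + Real.sqrt (4 * n + 2 + x ^ 2)) < U n x / U (n - 1) x ∧
      U n x / U (n - 1) x < 2 / (x + Real.sqrt (4 * n - 2 + x ^ 2))) ∧
    (∀ n x : ℝ, -1/2 < n → n < 1/2 → 0 ≤ x →
      2 / (x + Real.sqrt (4 * n + 2 + x ^ 2)) < U n x / U (n - 1) x) ∧
    (∀ x : ℝ, 0 < x →
      2 / (x + Real.sqrt (4 * (-1/2 : ℝ) + 2 + x ^ 2)) =
        U (-1/2) x / U (-1/2 - 1) x) := by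
  refine ⟨fun n x hn hx => ⟨PCFaux.lower hU n x (by linarith) hx, PCFaux.upper hU n x hn hx⟩,
    fun n x hn _ hx => PCFaux.lower hU n x hn hx,
    fun x hx => PCFaux.eqcase hU x hx⟩
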